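/- Let A₁ and B₁ be p×p real symmetric matrices and B₂ a q×q real matrix, with A₁ and B₂ nonsingular diagonal and B₁ nonsingular. Then A₁ and B₁ are simultaneously diagonalizable via congruence if and only if A := diag(A₁, 0_q) and B := diag(B₁, B₂) are simultaneously diagonalizable via congruence. -/

import Mathlib

open Matrix

def sumLeftEquiv (α β : Type*) : {x : α ⊕ β // x.isLeft = true} ≃ α where
  toFun x := x.1.getLeft x.2
  invFun a := ⟨Sum.inl a, rfl⟩
  left_inv := by rintro ⟨(a | b), h⟩
                 · rfl
                 · simp at h
  right_inv a := rfl

theorem stmt_4 (p q : ℕ)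
    (A₁ B₁ : Matrix (Fin p) (Fin p) ℝ) (B₂ : Matrix (Fin q) (Fin q) ℝ)
    (hA₁s : A₁.IsSymm) (hB₁s : B₁.IsSymm)
    (hA₁d : A₁.IsDiag) (hA₁ : IsUnit A₁)
    (hB₂d : B₂.IsDiag) (hB₂ : IsUnit B₂)
    (hB₁ : IsUnit B₁) :
    (∃ P : Matrix (Fin p) (Fin p) ℝ, IsUnit P ∧
        (Pᵀ * A₁ * P).IsDiag ∧ (Pᵀ * B₁ * P).IsDiag) ↔
      (∃ P : Matrix (Fin p ⊕ Fin q) (Fin p ⊕ Fin q) ℝ, IsUnit P ∧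
        (Pᵀ * fromBlocks A₁ 0 0 0 * P).IsDiag ∧
        (Pᵀ * fromBlocks B₁ 0 0 B₂ * P).IsDiag) := by
  constructor
  · intro h
    obtain ⟨P₁, hP₁, hPA, hPB⟩ := h
    refine ⟨fromBlocks P₁ 0 0 1, ?_, ?_, ?_⟩
    · rw [Matrix.isUnit_iff_isUnit_det, det_fromBlocks_zero₂₁, det_one, mul_one]
      exact ((Matrix.isUnit_iff_isUnit_det P₁).mp hP₁)
    · have : (fromBlocks P₁ 0 0 1)ᵀ * fromBlocks A₁ 0 0 0 * fromBlocks P₁ 0 0 (1 : Matrix (Fin q) (Fin q) ℝ)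
          = fromBlocks (P₁ᵀ * A₁ * P₁) 0 0 0 := by
        simp [fromBlocks_transpose, fromBlocks_multiply]
      rw [this]
      exact IsDiag.fromBlocks hPA isDiag_zero
    · have : (fromBlocks P₁ 0 0 1)ᵀ * fromBlocks B₁ 0 0 B₂ * fromBlocks P₁ 0 0 (1 : Matrix (Fin q) (Fin q) ℝ)
          = fromBlocks (P₁ᵀ * B₁ * P₁) 0 0 B₂ := by
        simp [fromBlocks_transpose, fromBlocks_multiply]
      rw [this]
      exact IsDiag.fromBlocks hPB hB₂d
  · intro h
    obtain ⟨P, hP, hPA, hPB⟩ := h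
    set A : Matrix (Fin p ⊕ Fin q) (Fin p ⊕ Fin q) ℝ := fromBlocks A₁ 0 0 0 with hAdef
    set B : Matrix (Fin p ⊕ Fin q) (Fin p ⊕ Fin q) ℝ := fromBlocks B₁ 0 0 B₂ with hBdef
    have hPdet : IsUnit P.det := (Matrix.isUnit_iff_isUnit_det P).mp hP
    -- A₁ diagonal entries nonzero
    have hA₁diag : A₁ = diagonal A₁.diag := hA₁d.diagonal_diag.symm
    have hA₁det : IsUnit A₁.det := (Matrix.isUnit_iff_isUnit_det A₁).mp hA₁
    have ha : ∀ i, A₁.diag i ≠ 0 := by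
      intro i
      have : A₁.det = ∏ j, A₁.diag j := by rw [hA₁diag]; simp [det_diagonal]
      rw [this, isUnit_iff_ne_zero] at hA₁det
      exact fun h0 => hA₁det (Finset.prod_eq_zero (Finset.mem_univ i) h0)
    -- diagonal of PᵀAP
    set dA := (Pᵀ * A * P).diag with hdA
    have hDA : Pᵀ * A * P = diagonal dA := hPA.diagonal_diag.symm
    -- A as a diagonal matrix
    have hAdiag : A = diagonal (Sum.elim A₁.diag (fun _ => (0:ℝ))) := by
      rw [← fromBlocks_diagonal, hAdef, ← hA₁diag, diagonal_zero]
    -- rank computation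
    have hrank : (diagonal dA).rank = A.rank := by
      rw [← hDA, Matrix.mul_assoc, rank_mul_eq_right_of_isUnit_det Pᵀ (A * P)
        (by rwa [det_transpose]), rank_mul_eq_left_of_isUnit_det P A hPdet]
    classical
    have hcard : Fintype.card {x : Fin p ⊕ Fin q // dA x ≠ 0} = p := by
      have h1 : (diagonal dA).rank = Fintype.card {x : Fin p ⊕ Fin q // dA x ≠ 0} :=
        Matrix.rank_diagonal dA
      have h2 : (diagonal (Sum.elim A₁.diag (fun _ => (0:ℝ)))).rank
          = Fintype.card {x : Fin p ⊕ Fin q // Sum.elim A₁.diag (fun _ => (0:ℝ)) x ≠ 0} :=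
        Matrix.rank_diagonal _
      rw [← h1, hrank, hAdiag, h2]
      have hiff : ∀ x : Fin p ⊕ Fin q, (Sum.elim A₁.diag (fun _ => (0:ℝ)) x ≠ 0) ↔ x.isLeft = true := by
        rintro (i | j)
        · simpa [Matrix.diag] using ha i
        · simp
      rw [Fintype.card_congr (Equiv.subtypeEquivRight hiff)]
      rw [Fintype.card_congr (sumLeftEquiv (Fin p) (Fin q)), Fintype.card_fin]
    -- build permutation
    have hcard2 : Fintype.card {x : Fin p ⊕ Fin q // dA x ≠ 0}
        = Fintype.card {x : Fin p ⊕ Fin q // x.isLeft = true} := by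
      rw [hcard, Fintype.card_congr (sumLeftEquiv (Fin p) (Fin q)), Fintype.card_fin]
    let e' : {x : Fin p ⊕ Fin q // dA x ≠ 0} ≃ {x : Fin p ⊕ Fin q // x.isLeft = true} :=
      Fintype.equivOfCardEq hcard2
    let σ : Equiv.Perm (Fin p ⊕ Fin q) := e'.extendSubtype
    let τ : Equiv.Perm (Fin p ⊕ Fin q) := σ.symm
    have hτl : ∀ i : Fin p, dA (τ (Sum.inl i)) ≠ 0 := by
      intro i h0
      have := e'.extendSubtype_not_mem _ (by simpa using h0)
      rw [show e'.extendSubtype (τ (Sum.inl i)) = Sum.inl i from σ.apply_symm_apply _] at this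
      exact this rfl
    have hτr : ∀ j : Fin q, dA (τ (Sum.inr j)) = 0 := by
      intro j
      by_contra h0
      have := e'.extendSubtype_mem _ h0
      rw [show e'.extendSubtype (τ (Sum.inr j)) = Sum.inr j from σ.apply_symm_apply _] at this
      simp at this
    -- congruence by permutation
    set Q : Matrix (Fin p ⊕ Fin q) (Fin p ⊕ Fin q) ℝ := P.submatrix id ⇑τ with hQdef
    have key : ∀ M : Matrix (Fin p ⊕ Fin q) (Fin p ⊕ Fin q) ℝ,
        Qᵀ * M * Q = (Pᵀ * M * P).submatrix ⇑τ ⇑τ := by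
      intro M
      rw [hQdef, transpose_submatrix]
      calc Pᵀ.submatrix ⇑τ id * M * P.submatrix id ⇑τ
          = (Pᵀ.submatrix ⇑τ ⇑(Equiv.refl _) * M.submatrix ⇑(Equiv.refl _) id) * P.submatrix id ⇑τ := by
            simp
        _ = (Pᵀ * M).submatrix ⇑τ id * P.submatrix id ⇑τ := by rw [submatrix_mul_equiv]
        _ = (Pᵀ * M).submatrix ⇑τ ⇑(Equiv.refl _) * P.submatrix ⇑(Equiv.refl _) ⇑τ := by simp
        _ = (Pᵀ * M * P).submatrix ⇑τ ⇑τ := by rw [submatrix_mul_equiv]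
    have hQunit : IsUnit Q := by
      refine (Matrix.isUnit_iff_isUnit_det _).mpr (Matrix.isUnit_det_of_right_inverse (B := P⁻¹.submatrix ⇑τ id) ?_)
      rw [hQdef]
      calc P.submatrix id ⇑τ * P⁻¹.submatrix ⇑τ id = (P * P⁻¹).submatrix id id := by
            rw [submatrix_mul_equiv P P⁻¹ id τ id]
        _ = 1 := by rw [mul_nonsing_inv P hPdet, submatrix_id_id]
    -- diagonal of QᵀBQ
    set dB := (Pᵀ * B * P).diag with hdB
    have hDB : Pᵀ * B * P = diagonal dB := hPB.diagonal_diag.symm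
    have hBdet : IsUnit B.det := by
      rw [hBdef, det_fromBlocks_zero₂₁]
      exact ((Matrix.isUnit_iff_isUnit_det B₁).mp hB₁).mul ((Matrix.isUnit_iff_isUnit_det B₂).mp hB₂)
    have hb : ∀ x, dB x ≠ 0 := by
      intro x h0
      have hdet : (Pᵀ * B * P).det = Pᵀ.det * B.det * P.det := by rw [det_mul, det_mul]
      have : IsUnit (Pᵀ * B * P).det := by
        rw [hdet]; exact ((by rwa [det_transpose] : IsUnit Pᵀ.det).mul hBdet).mul hPdet
      rw [hDB, det_diagonal, isUnit_iff_ne_zero] at this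
      exact this (Finset.prod_eq_zero (Finset.mem_univ x) h0)
    -- form block equations
    have hQA : Qᵀ * A * Q = diagonal (dA ∘ ⇑τ) := by
      rw [key, hDA, submatrix_diagonal_equiv]
    have hQB : Qᵀ * B * Q = diagonal (dB ∘ ⇑τ) := by
      rw [key, hDB, submatrix_diagonal_equiv]
    set P11 := Q.toBlocks₁₁ with h11
    set P12 := Q.toBlocks₁₂ with h12
    set P21 := Q.toBlocks₂₁ with h21
    set P22 := Q.toBlocks₂₂ with h22
    have hQblocks : Q = fromBlocks P11 P12 P21 P22 := (fromBlocks_toBlocks Q).symm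
    set dAl : Fin p → ℝ := fun i => dA (τ (Sum.inl i)) with hdAl
    set dBl : Fin p → ℝ := fun i => dB (τ (Sum.inl i)) with hdBl
    set dBr : Fin q → ℝ := fun j => dB (τ (Sum.inr j)) with hdBr
    have hdAτ : diagonal (dA ∘ ⇑τ) = fromBlocks (diagonal dAl) 0 0 0 := by
      have h0 : dA ∘ ⇑τ = Sum.elim dAl (fun _ => (0:ℝ)) := by
        funext x; cases x with
        | inl i => rfl
        | inr j => exact hτr j
      rw [h0, ← fromBlocks_diagonal, diagonal_zero]
    have hdBτ : diagonal (dB ∘ ⇑τ) = fromBlocks (diagonal dBl) 0 0 (diagonal dBr) := by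
      have h0 : dB ∘ ⇑τ = Sum.elim dBl dBr := by
        funext x; cases x with
        | inl i => rfl
        | inr j => rfl
      rw [h0, ← fromBlocks_diagonal]
    rw [hdAτ, hQblocks, hAdef, fromBlocks_transpose, fromBlocks_multiply, fromBlocks_multiply,
      fromBlocks_inj] at hQA
    rw [hdBτ, hQblocks, hBdef, fromBlocks_transpose, fromBlocks_multiply, fromBlocks_multiply,
      fromBlocks_inj] at hQB
    simp only [Matrix.mul_zero, Matrix.zero_mul, add_zero, zero_add, Matrix.mul_one] at hQA hQB
    obtain ⟨eA11, eA12, eA21, eA22⟩ := hQA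
    obtain ⟨eB11, eB12, eB21, eB22⟩ := hQB
    -- P11 is invertible
    have hdAldet : IsUnit (diagonal dAl).det := by
      rw [det_diagonal]
      exact isUnit_iff_ne_zero.mpr (Finset.prod_ne_zero_iff.mpr fun i _ => hτl i)
    have hP11det : IsUnit P11.det := by
      have hdet : P11ᵀ.det * A₁.det * P11.det = (diagonal dAl).det := by
        rw [← det_mul, ← det_mul, eA11]
      rw [← hdet] at hdAldet
      exact isUnit_of_mul_isUnit_right hdAldet
    have hP11 : IsUnit P11 := (Matrix.isUnit_iff_isUnit_det P11).mpr hP11det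
    -- P12 = 0
    have hP11Adet : IsUnit (P11ᵀ * A₁).det := by
      rw [det_mul, det_transpose]
      exact hP11det.mul hA₁det
    have hP12 : P12 = 0 := by
      calc P12 = (P11ᵀ * A₁)⁻¹ * (P11ᵀ * A₁ * P12) := by
            rw [← Matrix.mul_assoc, nonsing_inv_mul _ hP11Adet, Matrix.one_mul]
        _ = 0 := by rw [eA12, Matrix.mul_zero]
    rw [hP12] at eB12 eB22
    simp only [transpose_zero, Matrix.zero_mul, Matrix.mul_zero, zero_add, add_zero] at eB12 eB22
    -- P22 is invertible
    have hdBrdet : IsUnit (diagonal dBr).det := by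
      rw [det_diagonal]
      exact isUnit_iff_ne_zero.mpr (Finset.prod_ne_zero_iff.mpr fun j _ => hb _)
    have hP22det : IsUnit P22.det := by
      have hdet : P22ᵀ.det * B₂.det * P22.det = (diagonal dBr).det := by
        rw [← det_mul, ← det_mul, eB22]
      rw [← hdet] at hdBrdet
      exact isUnit_of_mul_isUnit_right hdBrdet
    -- P21 = 0
    have hB₂P22det : IsUnit (B₂ * P22).det := by
      rw [det_mul]
      exact ((Matrix.isUnit_iff_isUnit_det B₂).mp hB₂).mul hP22det
    have hP21 : P21 = 0 := by
      have hT : P21ᵀ = 0 := by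
        calc P21ᵀ = (P21ᵀ * (B₂ * P22)) * (B₂ * P22)⁻¹ := by
              rw [Matrix.mul_assoc, mul_nonsing_inv _ hB₂P22det, Matrix.mul_one]
          _ = 0 := by rw [← Matrix.mul_assoc, eB12, Matrix.zero_mul]
      rwa [transpose_eq_zero] at hT
    rw [hP21] at eB11
    simp only [transpose_zero, Matrix.zero_mul, Matrix.mul_zero, add_zero] at eB11
    exact ⟨P11, hP11, by rw [eA11]; exact isDiag_diagonal _, by rw [eB11]; exact isDiag_diagonal _⟩
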